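/- arXiv:0911.4280 — 2 statements merged into one kernel-verified Lean document; each statement's English description precedes it below -/
import Mathlib

section
/- Let σ > 1 and let α be a multi-index in ℕ³ with |α| ≥ 3. Then the sum over all multi-indices β ≤ α with 3 ≤ |β| ≤ |α| of (|α|!/(|β|! (|α|-|β|)!)) ((|β|-3)!)^σ ((|α|-|β|)!)^σ is bounded by C_σ ((|α|-1)!)^σ |α|^σ for some constant C_σ depending only on σ. -/
/-- Length of a multi-index in `ℕ³`. -/
def mdeg (β : ℕ × ℕ × ℕ) : ℕ := β.1 + β.2.1 + β.2.2

open Finset Real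

private lemma harmonic_le (ε : ℝ) (h0 : 0 < ε) (h1 : ε ≤ 1) (n : ℕ) :
    ∑ i ∈ Finset.range n, (1 : ℝ) / (i + 1) ≤ (n : ℝ) ^ ε / ε := by
  have key : ∀ i : ℕ, (1 : ℝ) / (i + 1) ≤ (((i+1 : ℕ) : ℝ) ^ ε - ((i : ℕ) : ℝ) ^ ε) / ε := by
    intro i
    have hm1 : (1:ℝ) ≤ (i:ℝ) + 1 := by
      have h : (0:ℝ) ≤ (i:ℝ) := Nat.cast_nonneg i
      linarith
    have hmpos : (0:ℝ) < (i:ℝ) + 1 := by positivity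
    set m : ℝ := (i : ℝ) + 1 with hm
    have hb : ((1 : ℝ) + (-1/m)) ^ ε ≤ 1 + ε * (-1/m) := by
      apply rpow_one_add_le_one_add_mul_self ?_ h0.le h1
      have : 1/m ≤ 1 := by
        rw [div_le_one hmpos]; linarith
      rw [neg_div]; linarith
    have hrw : (1 : ℝ) + (-1/m) = (i:ℝ) / m := by field_simp; ring
    rw [hrw, Real.div_rpow (Nat.cast_nonneg i) hmpos.le] at hb
    have hmε : (1:ℝ) ≤ m ^ ε := Real.one_le_rpow hm1 h0.le
    have hmεpos : (0:ℝ) < m ^ ε := by positivity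
    have h2 : (i:ℝ) ^ ε ≤ m ^ ε - (ε/m) * m ^ ε := by
      have h2' : (i:ℝ) ^ ε ≤ (1 + ε * (-1/m)) * m ^ ε := by
        calc (i:ℝ) ^ ε = ((i:ℝ) ^ ε / m ^ ε) * m ^ ε := by field_simp
          _ ≤ (1 + ε * (-1/m)) * m ^ ε := mul_le_mul_of_nonneg_right hb hmεpos.le
      have : (1 + ε * (-1/m)) * m ^ ε = m ^ ε - (ε/m) * m ^ ε := by ring
      linarith
    have hεm : (0:ℝ) ≤ ε/m := by positivity
    have h3 : ε/m ≤ (ε/m) * m ^ ε := le_mul_of_one_le_right hεm hmε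
    have h4 : (i:ℝ) ^ ε ≤ m ^ ε - ε/m := by linarith
    have hcast : ((i+1 : ℕ) : ℝ) = m := by push_cast; ring
    rw [hcast, le_div_iff₀ h0]
    have : (1:ℝ)/m * ε = ε/m := by ring
    rw [this]
    linarith
  calc ∑ i ∈ Finset.range n, (1 : ℝ) / (i + 1)
      ≤ ∑ i ∈ Finset.range n, (((i+1 : ℕ) : ℝ) ^ ε - ((i : ℕ) : ℝ) ^ ε) / ε :=
        Finset.sum_le_sum fun i _ => key i
    _ = (∑ i ∈ Finset.range n, ((((i+1 : ℕ) : ℝ)) ^ ε - (((i : ℕ) : ℝ)) ^ ε)) / ε :=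
        (Finset.sum_div _ _ _).symm
    _ = ((n : ℝ) ^ ε - ((0:ℕ) : ℝ) ^ ε) / ε := by
        rw [Finset.sum_range_sub (fun k : ℕ => ((k : ℕ) : ℝ) ^ ε)]
    _ = (n : ℝ) ^ ε / ε := by
        norm_num [Real.zero_rpow h0.ne']

private lemma term_le (σ : ℝ) (hσ : 1 < σ) (a b : ℕ) (hb : 3 ≤ b) (hba : b ≤ a) :
    (a.factorial : ℝ) / ((b.factorial : ℝ) * ((a-b).factorial : ℝ)) *
      ((b-3).factorial : ℝ) ^ σ * ((a-b).factorial : ℝ) ^ σ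
    ≤ ((a-1).factorial : ℝ) ^ σ * (6 * a / (b:ℝ)^3) := by
  have ha : 3 ≤ a := hb.trans hba
  set X : ℝ := ((b-3).factorial : ℝ) with hXdef
  set Y : ℝ := ((a-b).factorial : ℝ) with hYdef
  set F : ℝ := (((a-1).factorial : ℕ) : ℝ) with hFdef
  have hX : (0:ℝ) < X := by positivity
  have hY : (0:ℝ) < Y := by positivity
  have hF : (0:ℝ) < F := by positivity
  have hσ1 : (0:ℝ) ≤ σ - 1 := by linarith
  set c : ℝ := (a.choose b : ℝ) with hcdef
  have hc : (0:ℝ) ≤ c := by positivity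
  -- LHS simplification
  have hch : (a.factorial : ℝ) / ((b.factorial : ℝ) * Y) = c := by
    have h := Nat.choose_mul_factorial_mul_factorial hba
    have h' : (a.factorial : ℝ) = c * (b.factorial : ℝ) * Y := by
      rw [hcdef, hYdef]; exact_mod_cast h.symm
    rw [h']
    have hbf : ((b.factorial : ℕ) : ℝ) ≠ 0 := by positivity
    field_simp
  have hsplit : ∀ Z : ℝ, 0 < Z → Z ^ σ = Z * Z ^ (σ - 1) := by
    intro Z hZ
    rw [← Real.rpow_one_add' hZ.le (by linarith : (1:ℝ) + (σ-1) ≠ 0)]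
    ring_nf
  have hLHS : (a.factorial : ℝ) / ((b.factorial : ℝ) * Y) * X ^ σ * Y ^ σ
      = (c * X * Y) * ((X*Y) ^ (σ-1)) := by
    rw [hch, hsplit X hX, hsplit Y hY, Real.mul_rpow hX.le hY.le]
    ring
  rw [hLHS]
  -- X * Y ≤ (a-1)!
  have hXY : X * Y ≤ F := by
    have hd : (b-3).factorial * (a-b).factorial ∣ (a-1).factorial := by
      have h := Nat.factorial_mul_factorial_dvd_factorial_add (b-3) (a-b)
      rw [show b-3+(a-b) = a-3 from by omega] at h
      exact h.trans (Nat.factorial_dvd_factorial (by omega))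
    have hle := Nat.le_of_dvd (Nat.factorial_pos _) hd
    rw [hXdef, hYdef, hFdef]
    exact_mod_cast hle
  have hpow : (X*Y) ^ (σ-1) ≤ F ^ (σ-1) :=
    Real.rpow_le_rpow (by positivity) hXY hσ1
  -- c * X * Y = a! / (b*(b-1)*(b-2))
  set P : ℝ := (b:ℝ) * ((b:ℝ)-1) * ((b:ℝ)-2) with hPdef
  have hb3 : (3:ℝ) ≤ (b:ℝ) := by exact_mod_cast hb
  have hPpos : (0:ℝ) < P := by
    rw [hPdef]
    apply mul_pos (mul_pos (by linarith) (by linarith)) (by linarith)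
  have hcXYP : c * X * Y * P = (a.factorial : ℝ) := by
    have hbfac : b.factorial = b * (b-1) * (b-2) * (b-3).factorial := by
      obtain ⟨m, rfl⟩ : ∃ m, b = m + 3 := ⟨b - 3, by omega⟩
      simp [Nat.factorial_succ]
      ring
    have hN : a.choose b * (b-3).factorial * (a-b).factorial * (b * (b-1) * (b-2))
        = a.factorial := by
      rw [← Nat.choose_mul_factorial_mul_factorial hba, hbfac]
      ring
    have := congrArg (fun t : ℕ => (t : ℝ)) hN
    push_cast [Nat.cast_sub (by omega : 1 ≤ b), Nat.cast_sub (by omega : 2 ≤ b)] at this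
    rw [hcdef, hXdef, hYdef, hPdef]
    push_cast
    linarith [this]
  have hfa : (a.factorial : ℝ) = (a:ℝ) * F := by
    rw [hFdef]
    exact_mod_cast (Nat.mul_factorial_pred (by omega : a ≠ 0)).symm
  have hcXY : c * X * Y = (a:ℝ) * F / P := by
    field_simp at hcXYP ⊢
    linarith [hcXYP]
  have hcXYnn : (0:ℝ) ≤ c * X * Y := by positivity
  calc (c * X * Y) * ((X*Y) ^ (σ-1))
      ≤ (c * X * Y) * F ^ (σ-1) := mul_le_mul_of_nonneg_left hpow hcXYnn
    _ = ((a:ℝ) * F / P) * F ^ (σ-1) := by rw [hcXY]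
    _ = (F * F ^ (σ-1)) * ((a:ℝ) / P) := by ring
    _ = F ^ σ * ((a:ℝ) / P) := by rw [← hsplit F hF]
    _ ≤ F ^ σ * (6 * a / (b:ℝ)^3) := by
        apply mul_le_mul_of_nonneg_left ?_ (by positivity)
        rw [div_le_div_iff₀ hPpos (by positivity)]
        have hann : (0:ℝ) ≤ (a:ℝ) := Nat.cast_nonneg a
        have ht : (0:ℝ) ≤ (b:ℝ) - 3 := by linarith
        have hPb : (b:ℝ)^3 ≤ 6 * P := by
          rw [hPdef]
          nlinarith [ht, mul_nonneg ht ht, mul_nonneg (mul_nonneg ht ht) ht]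
        nlinarith [mul_le_mul_of_nonneg_left hPb hann]

private lemma card_fiber_le (α : ℕ × ℕ × ℕ) (k : ℕ) :
    ((((Finset.Iic α).filter (fun β => 3 ≤ mdeg β)).filter (fun β => mdeg β = k)).card : ℝ)
      ≤ ((k:ℝ)+1)^2 := by
  have h : (((Finset.Iic α).filter (fun β => 3 ≤ mdeg β)).filter (fun β => mdeg β = k)).card
      ≤ ((Finset.range (k+1)) ×ˢ (Finset.range (k+1))).card := by
    apply Finset.card_le_card_of_injOn (fun β => (β.1, β.2.1))
    · intro β hβ
      simp only [Finset.mem_coe, Finset.mem_filter] at hβ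
      simp only [mdeg] at hβ
      simp only [Finset.mem_coe, Finset.mem_product, Finset.mem_range]
      omega
    · intro β hβ γ hγ hbg
      simp only [Finset.mem_coe, Finset.coe_filter, Set.mem_setOf_eq, Finset.mem_filter] at hβ hγ
      simp only [mdeg] at hβ hγ
      simp only [Prod.mk.injEq] at hbg
      obtain ⟨h1, h2⟩ := hbg
      have hβ' := hβ.2
      have hγ' := hγ.2
      have h3 : β.2.2 = γ.2.2 := by omega
      exact Prod.ext h1 (Prod.ext h2 h3)
  rw [Finset.card_product, Finset.card_range] at h
  have := (Nat.cast_le (α := ℝ)).mpr h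
  push_cast at this
  nlinarith [this]

theorem sum_binom_factorial_le (σ : ℝ) (hσ : 1 < σ) :
    ∃ C : ℝ, ∀ α : ℕ × ℕ × ℕ, 3 ≤ mdeg α →
      ∑ β ∈ (Finset.Iic α).filter (fun β => 3 ≤ mdeg β),
          ((mdeg α).factorial : ℝ) /
              (((mdeg β).factorial : ℝ) * (((mdeg α - mdeg β).factorial : ℝ))) *
            (((mdeg β - 3).factorial : ℝ)) ^ σ * (((mdeg α - mdeg β).factorial : ℝ)) ^ σ
        ≤ C * (((mdeg α - 1).factorial : ℝ)) ^ σ * ((mdeg α : ℝ)) ^ σ := by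
  set ε : ℝ := min (σ - 1) 1 with hεdef
  have hε0 : 0 < ε := lt_min (by linarith) one_pos
  have hε1 : ε ≤ 1 := min_le_right _ _
  have hεσ : ε ≤ σ - 1 := min_le_left _ _
  refine ⟨24 / ε, fun α hα => ?_⟩
  set n : ℕ := mdeg α with hndef
  set S : Finset (ℕ × ℕ × ℕ) := (Finset.Iic α).filter (fun β => 3 ≤ mdeg β) with hSdef
  set F : ℝ := ((n-1).factorial : ℝ) with hFdef
  have hF : (0:ℝ) < F := by positivity
  have hn3 : (3:ℝ) ≤ (n:ℝ) := by exact_mod_cast hα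
  have hmem : ∀ β ∈ S, 3 ≤ mdeg β ∧ mdeg β ≤ n := by
    intro β hβ
    rw [hSdef, Finset.mem_filter, Finset.mem_Iic] at hβ
    refine ⟨hβ.2, ?_⟩
    have h1 := hβ.1
    rw [Prod.le_def] at h1
    have h2 := h1.2
    rw [Prod.le_def] at h2
    simp only [mdeg, hndef]
    exact Nat.add_le_add (Nat.add_le_add h1.1 h2.1) h2.2
  have step1 : ∑ β ∈ S,
          ((n).factorial : ℝ) /
              (((mdeg β).factorial : ℝ) * (((n - mdeg β).factorial : ℝ))) *
            (((mdeg β - 3).factorial : ℝ)) ^ σ * (((n - mdeg β).factorial : ℝ)) ^ σ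
        ≤ ∑ β ∈ S, F ^ σ * (6 * n / ((mdeg β : ℝ))^3) := by
    apply Finset.sum_le_sum
    intro β hβ
    obtain ⟨h3, hbn⟩ := hmem β hβ
    exact term_le σ hσ n (mdeg β) h3 hbn
  have hmaps : ∀ β ∈ S, mdeg β ∈ Finset.Icc 3 n := by
    intro β hβ
    obtain ⟨h3, hbn⟩ := hmem β hβ
    exact Finset.mem_Icc.mpr ⟨h3, hbn⟩
  have step2 : ∑ β ∈ S, (6 * (n:ℝ) / ((mdeg β : ℝ))^3)
      = ∑ k ∈ Finset.Icc 3 n, ∑ β ∈ S.filter (fun β => mdeg β = k),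
          (6 * (n:ℝ) / ((mdeg β : ℝ))^3) :=
    (Finset.sum_fiberwise_of_maps_to hmaps _).symm
  have step3 : ∀ k ∈ Finset.Icc 3 n,
      ∑ β ∈ S.filter (fun β => mdeg β = k), (6 * (n:ℝ) / ((mdeg β : ℝ))^3)
        ≤ 24 * (n:ℝ) / k := by
    intro k hk
    rw [Finset.mem_Icc] at hk
    have hk3 : (3:ℝ) ≤ (k:ℝ) := by exact_mod_cast hk.1
    have heq : ∑ β ∈ S.filter (fun β => mdeg β = k), (6 * (n:ℝ) / ((mdeg β : ℝ))^3)
        = (S.filter (fun β => mdeg β = k)).card * (6 * (n:ℝ) / (k:ℝ)^3) := by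
      have hcg : ∀ β ∈ S.filter (fun β => mdeg β = k),
          6 * (n:ℝ) / ((mdeg β : ℝ))^3 = 6 * (n:ℝ) / (k:ℝ)^3 := by
        intro β hβ
        rw [(Finset.mem_filter.mp hβ).2]
      rw [Finset.sum_congr rfl hcg, Finset.sum_const, nsmul_eq_mul]
    rw [heq]
    have hcard := card_fiber_le α k
    calc ((S.filter (fun β => mdeg β = k)).card : ℝ) * (6 * (n:ℝ) / (k:ℝ)^3)
        ≤ ((k:ℝ)+1)^2 * (6 * (n:ℝ) / (k:ℝ)^3) := by
          apply mul_le_mul_of_nonneg_right _ (by positivity)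
          exact hcard
      _ ≤ 24 * (n:ℝ) / k := by
          have hnn : (0:ℝ) ≤ (n:ℝ) := Nat.cast_nonneg n
          have hk0 : (0:ℝ) < (k:ℝ) := by linarith
          rw [mul_div_assoc', div_le_div_iff₀ (by positivity) hk0]
          have h4 : ((k:ℝ)+1)^2 ≤ 4*(k:ℝ)^2 := by nlinarith [hk3]
          nlinarith [mul_le_mul_of_nonneg_right
            (mul_le_mul_of_nonneg_left h4 (by positivity : (0:ℝ) ≤ 6*(n:ℝ))) hk0.le]
  have step4 : ∑ k ∈ Finset.Icc 3 n, 24 * (n:ℝ) / k ≤ 24 * (n:ℝ) * ((n:ℝ)^ε / ε) := by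
    have hsub : Finset.Icc 3 n ⊆ Finset.Icc 1 n := by
      intro k hk; rw [Finset.mem_Icc] at hk ⊢; omega
    have h1 : ∑ k ∈ Finset.Icc 3 n, 24 * (n:ℝ) / k ≤ ∑ k ∈ Finset.Icc 1 n, 24 * (n:ℝ) / k := by
      apply Finset.sum_le_sum_of_subset_of_nonneg hsub
      intro k _ _; positivity
    have h2 : ∑ k ∈ Finset.Icc 1 n, 24 * (n:ℝ) / k
        = 24 * (n:ℝ) * ∑ i ∈ Finset.range n, (1:ℝ) / (i+1) := by
      rw [Finset.mul_sum, ← Finset.Ico_add_one_right_eq_Icc, Finset.sum_Ico_eq_sum_range]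
      apply Finset.sum_congr rfl
      intro i _
      push_cast
      rw [mul_one_div]
      ring_nf
    have h3 := harmonic_le ε hε0 hε1 n
    calc ∑ k ∈ Finset.Icc 3 n, 24 * (n:ℝ) / k
        ≤ ∑ k ∈ Finset.Icc 1 n, 24 * (n:ℝ) / k := h1
      _ = 24 * (n:ℝ) * ∑ i ∈ Finset.range n, (1:ℝ) / (i+1) := h2
      _ ≤ 24 * (n:ℝ) * ((n:ℝ)^ε/ε) := mul_le_mul_of_nonneg_left h3 (by positivity)
  -- combine
  have combine : ∑ β ∈ S, F ^ σ * (6 * (n:ℝ) / ((mdeg β : ℝ))^3)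
      ≤ F ^ σ * (24 * (n:ℝ) * ((n:ℝ)^ε / ε)) := by
    rw [← Finset.mul_sum]
    apply mul_le_mul_of_nonneg_left _ (by positivity)
    calc ∑ β ∈ S, (6 * (n:ℝ) / ((mdeg β : ℝ))^3)
        = ∑ k ∈ Finset.Icc 3 n, ∑ β ∈ S.filter (fun β => mdeg β = k),
            (6 * (n:ℝ) / ((mdeg β : ℝ))^3) := step2
      _ ≤ ∑ k ∈ Finset.Icc 3 n, 24 * (n:ℝ) / k := Finset.sum_le_sum step3
      _ ≤ 24 * (n:ℝ) * ((n:ℝ)^ε / ε) := step4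
  have final : F ^ σ * (24 * (n:ℝ) * ((n:ℝ)^ε / ε)) ≤ 24 / ε * F ^ σ * (n:ℝ) ^ σ := by
    have hn0 : (0:ℝ) < (n:ℝ) := by linarith
    have hn1 : (1:ℝ) ≤ (n:ℝ) := by linarith
    have hpow : (n:ℝ) * (n:ℝ)^ε ≤ (n:ℝ)^σ := by
      have h1 : (n:ℝ) * (n:ℝ)^ε = (n:ℝ)^(1+ε) := by
        rw [Real.rpow_add hn0, Real.rpow_one]
      rw [h1]
      exact Real.rpow_le_rpow_of_exponent_le hn1 (by linarith)
    have hFσ : (0:ℝ) ≤ F ^ σ := by positivity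
    calc F ^ σ * (24 * (n:ℝ) * ((n:ℝ)^ε / ε))
        = (24/ε) * F ^ σ * ((n:ℝ) * (n:ℝ)^ε) := by ring
      _ ≤ (24/ε) * F ^ σ * (n:ℝ)^σ := by
          apply mul_le_mul_of_nonneg_left hpow (by positivity)
  calc ∑ β ∈ S,
          ((n).factorial : ℝ) /
              (((mdeg β).factorial : ℝ) * (((n - mdeg β).factorial : ℝ))) *
            (((mdeg β - 3).factorial : ℝ)) ^ σ * (((n - mdeg β).factorial : ℝ)) ^ σ
      ≤ ∑ β ∈ S, F ^ σ * (6 * (n:ℝ) / ((mdeg β : ℝ))^3) := step1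
    _ ≤ F ^ σ * (24 * (n:ℝ) * ((n:ℝ)^ε / ε)) := combine
    _ ≤ 24 / ε * F ^ σ * (n:ℝ) ^ σ := final
end

section
/- Let γ ∈ [0,1] and a_{ij}(v) = (δ_{ij} - v_i v_j/|v|²)|v|^{γ+2}. There exists C̃ ≥ 1 such that for every multi-index β with |β| ≥ 2 and all v, v_* ∈ ℝ³ with |v - v_*| ≥ 1, one has |(∂^β a_{ij})(v - v_*)| ≤ C̃^{|β|} |β|! (1 + |v_*|^γ + |v|^γ). -/
noncomputable section

/-- Partial derivative in the `i`-th coordinate direction. -/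
def pdiff (i : Fin 3) (f : EuclideanSpace ℝ (Fin 3) → ℝ) :
    EuclideanSpace ℝ (Fin 3) → ℝ :=
  fun v => fderiv ℝ f v (EuclideanSpace.single i 1)

/-- The Landau collision kernel matrix entry. -/
def aL (γ : ℝ) (i j : Fin 3) (v : EuclideanSpace ℝ (Fin 3)) : ℝ :=
  ((if i = j then 1 else 0) - v i * v j / ‖v‖ ^ 2) * ‖v‖ ^ (γ + 2)


/-- Mixed partial derivative of order `lam`. -/
def pdiffIter (lam : Fin 3 → ℕ) (f : EuclideanSpace ℝ (Fin 3) → ℝ) :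
    EuclideanSpace ℝ (Fin 3) → ℝ :=
  (pdiff 0)^[lam 0] ((pdiff 1)^[lam 1] ((pdiff 2)^[lam 2] f))

open Finset

abbrev E3 := EuclideanSpace ℝ (Fin 3)

lemma norm_rpow_eq (s : ℝ) (w : E3) : (‖w‖ ^ 2 : ℝ) ^ (s / 2) = ‖w‖ ^ s := by
  rw [← Real.rpow_natCast ‖w‖ 2, ← Real.rpow_mul (norm_nonneg w)]
  ring_nf

lemma hasFDeriv_norm_rpow (s : ℝ) (v : E3) (hv : v ≠ 0) :
    HasFDerivAt (fun w : E3 => ‖w‖ ^ s)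
      (((s / 2) * (‖v‖ ^ 2 : ℝ) ^ (s / 2 - 1)) •
        (2 • ((innerSL ℝ v).comp (ContinuousLinearMap.id ℝ E3)))) v := by
  have h0 : (‖v‖ ^ 2 : ℝ) ≠ 0 := by
    have : ‖v‖ ≠ 0 := norm_ne_zero_iff.mpr hv
    positivity
  have h := ((hasFDerivAt_id v).norm_sq).rpow_const (p := s / 2) (Or.inl h0)
  have he : (fun w : E3 => (‖w‖ ^ 2 : ℝ) ^ (s / 2)) = fun w : E3 => ‖w‖ ^ s :=
    funext fun w => norm_rpow_eq s w
  rw [← he]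
  simpa using h

lemma hasFDeriv_mono (d : Fin 3 → ℕ) (v : E3) :
    HasFDerivAt (fun w : E3 => ∏ l, w l ^ d l)
      (∑ l, (∏ j ∈ Finset.univ.erase l, v j ^ d j) •
        (((d l : ℝ) * v l ^ (d l - 1)) • (EuclideanSpace.proj l : E3 →L[ℝ] ℝ))) v := by
  have hp : ∀ l : Fin 3, HasFDerivAt (fun w : E3 => w l)
      (EuclideanSpace.proj (𝕜 := ℝ) l) v := fun l => by simpa using (EuclideanSpace.proj (𝕜 := ℝ) l).hasFDerivAt
  exact HasFDerivAt.finset_prod (fun l _ =>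
    (hasDerivAt_pow (d l) (v l)).comp_hasFDerivAt v (hp l))

abbrev Tm := ℝ × (Fin 3 → ℕ) × ℕ

def tmSem (γ : ℝ) (t : Tm) (v : E3) : ℝ :=
  t.1 * (∏ l, v l ^ t.2.1 l) * ‖v‖ ^ (γ + 2 - 2 * (t.2.2 : ℝ))

def tmD (γ : ℝ) (k : Fin 3) (t : Tm) : List Tm :=
  [(t.1 * t.2.1 k, fun l => t.2.1 l - (if l = k then 1 else 0), t.2.2),
   (t.1 * (γ + 2 - 2 * (t.2.2 : ℝ)), fun l => t.2.1 l + (if l = k then 1 else 0), t.2.2 + 1)]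

def lSem (γ : ℝ) (L : List Tm) (v : E3) : ℝ := (L.map (fun t => tmSem γ t v)).sum

def lD (γ : ℝ) (k : Fin 3) (L : List Tm) : List Tm := (L.map (tmD γ k)).flatten

lemma lSem_nil (γ : ℝ) : lSem γ [] = fun _ => (0:ℝ) := rfl
lemma lSem_cons (γ : ℝ) (t : Tm) (L : List Tm) (v : E3) :
    lSem γ (t :: L) v = tmSem γ t v + lSem γ L v := rfl
lemma lSem_append (γ : ℝ) (L1 L2 : List Tm) (v : E3) :
    lSem γ (L1 ++ L2) v = lSem γ L1 v + lSem γ L2 v := by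
  simp [lSem]
lemma lD_cons (γ : ℝ) (k : Fin 3) (t : Tm) (L : List Tm) :
    lD γ k (t :: L) = tmD γ k t ++ lD γ k L := rfl

lemma eval_mono_deriv (d : Fin 3 → ℕ) (v : E3) (k : Fin 3) :
    (∑ l, (∏ j ∈ Finset.univ.erase l, v j ^ d j) •
        (((d l : ℝ) * v l ^ (d l - 1)) • (EuclideanSpace.proj l : E3 →L[ℝ] ℝ)))
      (EuclideanSpace.single k 1)
    = (∏ j ∈ Finset.univ.erase k, v j ^ d j) * ((d k : ℝ) * v k ^ (d k - 1)) := by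
  have hs : ∀ l : Fin 3, (EuclideanSpace.proj (𝕜 := ℝ) l) (EuclideanSpace.single k (1:ℝ))
      = if l = k then 1 else 0 := by
    intro l
    simp [EuclideanSpace.single_apply]
  simp only [ContinuousLinearMap.coe_sum', Finset.sum_apply, ContinuousLinearMap.coe_smul',
    Pi.smul_apply, smul_eq_mul, hs]
  rw [Finset.sum_eq_single k]
  · simp
  · intro l _ hlk
    simp [hlk]
  · simp

lemma prod_pow_add (d : Fin 3 → ℕ) (v : E3) (k : Fin 3) :
    ∏ l, v l ^ (d l + (if l = k then 1 else 0)) = v k * ∏ l, v l ^ d l := by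
  have h1 : ∏ l ∈ Finset.univ.erase k, v l ^ (d l + (if l = k then 1 else 0))
      = ∏ l ∈ Finset.univ.erase k, v l ^ d l :=
    Finset.prod_congr rfl fun j hj => by simp [Finset.ne_of_mem_erase hj]
  rw [← Finset.mul_prod_erase Finset.univ _ (Finset.mem_univ k), h1,
    ← Finset.mul_prod_erase Finset.univ (fun l => v l ^ d l) (Finset.mem_univ k),
    if_pos rfl, pow_add, pow_one]
  ring

lemma prod_pow_sub (d : Fin 3 → ℕ) (v : E3) (k : Fin 3) :
    ((d k : ℝ)) * ∏ l, v l ^ (d l - (if l = k then 1 else 0))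
      = (∏ j ∈ Finset.univ.erase k, v j ^ d j) * ((d k : ℝ) * v k ^ (d k - 1)) := by
  rcases Nat.eq_zero_or_pos (d k) with h | h
  · simp [h]
  · have : ∏ l, v l ^ (d l - (if l = k then 1 else 0))
        = v k ^ (d k - 1) * ∏ j ∈ Finset.univ.erase k, v j ^ d j := by
      rw [← Finset.mul_prod_erase Finset.univ _ (Finset.mem_univ k)]
      simp only [if_pos rfl]
      congr 1
      exact Finset.prod_congr rfl fun j hj => by simp [Finset.ne_of_mem_erase hj]
    rw [this]; ring

lemma rpow_sub_two (x : ℝ) (hx : 0 < x) (s : ℝ) : (x ^ 2 : ℝ) ^ (s / 2 - 1) = x ^ (s - 2) := by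
  rw [← Real.rpow_natCast x 2, ← Real.rpow_mul hx.le]
  ring_nf

lemma tm_hasFDeriv (γ : ℝ) (t : Tm) (v : E3) (hv : v ≠ 0) :
    ∃ D : E3 →L[ℝ] ℝ, HasFDerivAt (tmSem γ t) D v ∧
      ∀ k, D (EuclideanSpace.single k 1) = lSem γ (tmD γ k t) v := by
  obtain ⟨c, d, m⟩ := t
  have hvn : (0:ℝ) < ‖v‖ := norm_pos_iff.mpr hv
  set s : ℝ := γ + 2 - 2 * (m : ℝ) with hs
  have h1 := hasFDeriv_mono d v
  have h2 := hasFDeriv_norm_rpow s v hv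
  have hmain := (h1.const_mul c).mul h2
  refine ⟨(c * ∏ l, v l ^ d l) •
        ((s / 2 * (‖v‖ ^ 2) ^ (s / 2 - 1)) • 2 • ((innerSL ℝ) v).comp (ContinuousLinearMap.id ℝ E3)) +
      ‖v‖ ^ s • c • ∑ l, (∏ j ∈ Finset.univ.erase l, v j ^ d j) •
        (((d l : ℝ)) * v l ^ (d l - 1)) • EuclideanSpace.proj l, ?_, ?_⟩
  · exact hmain
  · intro k
    have hD1 := eval_mono_deriv d v k
    simp only [ContinuousLinearMap.add_apply, ContinuousLinearMap.coe_smul', Pi.smul_apply,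
      smul_eq_mul, hD1]
    have hinner : (innerSL ℝ v) ((ContinuousLinearMap.id ℝ E3) (EuclideanSpace.single k 1))
        = v k := by
      simp [EuclideanSpace.inner_single_right]
    simp only [ContinuousLinearMap.comp_apply, ContinuousLinearMap.smul_apply, hinner]
    rw [rpow_sub_two ‖v‖ hvn s]
    -- now pure algebra
    simp only [lSem, tmD, tmSem, List.map_cons, List.map_nil, List.sum_cons, List.sum_nil]
    rw [← hs]
    have he2 : (γ + 2 - 2 * ((m+1 : ℕ) : ℝ)) = s - 2 := by push_cast [hs]; ring
    rw [he2]
    rw [prod_pow_add d v k]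
    have hsub := prod_pow_sub d v k
    simp only [smul_eq_mul]
    linear_combination (-(c * ‖v‖ ^ s)) * hsub

lemma l_hasFDeriv (γ : ℝ) (L : List Tm) (v : E3) (hv : v ≠ 0) :
    ∃ D : E3 →L[ℝ] ℝ, HasFDerivAt (lSem γ L) D v ∧
      ∀ k, D (EuclideanSpace.single k 1) = lSem γ (lD γ k L) v := by
  induction L with
  | nil => exact ⟨0, hasFDerivAt_const 0 v, fun k => by simp [lSem, lD]⟩
  | cons t L ih =>
    obtain ⟨Dt, hDt, hDtk⟩ := tm_hasFDeriv γ t v hv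
    obtain ⟨DL, hDL, hDLk⟩ := ih
    refine ⟨Dt + DL, ?_, ?_⟩
    · exact hDt.add hDL
    · intro k
      rw [lD_cons, lSem_append]
      simp [hDtk k, hDLk k]

lemma pdiff_lSem (γ : ℝ) (k : Fin 3) (L : List Tm) (v : E3) (hv : v ≠ 0) :
    pdiff k (lSem γ L) v = lSem γ (lD γ k L) v := by
  obtain ⟨D, hD, hDk⟩ := l_hasFDeriv γ L v hv
  rw [pdiff, hD.fderiv, hDk k]

lemma pdiff_congr (k : Fin 3) {f g : E3 → ℝ} {U : Set E3} (hU : IsOpen U)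
    (h : Set.EqOn f g U) : Set.EqOn (pdiff k f) (pdiff k g) U := by
  intro v hv
  have hfg : f =ᶠ[nhds v] g := Filter.eventuallyEq_of_mem (hU.mem_nhds hv) h
  simp only [pdiff, hfg.fderiv_eq]

lemma pdiff_iter_congr (k : Fin 3) (n : ℕ) {f g : E3 → ℝ} {U : Set E3} (hU : IsOpen U)
    (h : Set.EqOn f g U) : Set.EqOn ((pdiff k)^[n] f) ((pdiff k)^[n] g) U := by
  induction n with
  | zero => exact h
  | succ n ih =>
    rw [Function.iterate_succ_apply', Function.iterate_succ_apply']
    exact pdiff_congr k hU ih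

lemma pdiff_iter_lSem (γ : ℝ) (k : Fin 3) (n : ℕ) (L : List Tm) :
    Set.EqOn ((pdiff k)^[n] (lSem γ L)) (lSem γ ((lD γ k)^[n] L)) {v : E3 | v ≠ 0} := by
  induction n with
  | zero => exact fun v _ => rfl
  | succ n ih =>
    intro v hv
    rw [Function.iterate_succ_apply', Function.iterate_succ_apply']
    have h1 := pdiff_congr k (isOpen_compl_singleton) ih hv
    rw [h1, pdiff_lSem γ k _ v hv]

def L0 (i j : Fin 3) : List Tm :=
  [((if i = j then (1:ℝ) else 0), fun _ => 0, 0),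
   (-1, fun l => (if l = i then 1 else 0) + (if l = j then 1 else 0), 1)]

lemma aL_eq_lSem (γ : ℝ) (i j : Fin 3) :
    Set.EqOn (aL γ i j) (lSem γ (L0 i j)) {v : E3 | v ≠ 0} := by
  intro v hv
  have hvn : (0:ℝ) < ‖v‖ := norm_pos_iff.mpr hv
  have hprod : ∏ l, v l ^ ((if l = i then 1 else 0) + (if l = j then 1 else 0)) = v i * v j := by
    have h1 : ∀ a : Fin 3, ∏ l, v l ^ (if l = a then 1 else 0) = v a := by
      intro a
      have := prod_pow_add (fun _ => 0) v a
      simpa using this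
    simp only [pow_add, Finset.prod_mul_distrib, h1]
  have hexp : ‖v‖ ^ (γ + 2 - 2 * ((1:ℕ):ℝ)) = ‖v‖ ^ (γ + 2) / ‖v‖ ^ 2 := by
    push_cast
    rw [Real.rpow_sub hvn]
    congr 1
    rw [← Real.rpow_natCast ‖v‖ 2]
    norm_num
  simp only [aL, lSem, L0, tmSem, List.map_cons, List.map_nil, List.sum_cons, List.sum_nil,
    hprod, hexp]
  have h2 : (‖v‖:ℝ) ^ 2 ≠ 0 := by positivity
  field_simp
  split_ifs <;> ring

def mass (L : List Tm) : ℝ := (L.map (fun t => |t.1|)).sum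

def Good (n : ℕ) (L : List Tm) : Prop :=
  ∀ t ∈ L, t.1 = 0 ∨ (2 * t.2.2 = (∑ l, t.2.1 l) + n ∧ (∑ l, t.2.1 l) ≤ n + 2)

lemma mass_nonneg (L : List Tm) : 0 ≤ mass L := by
  apply List.sum_nonneg
  intro x hx
  simp only [List.mem_map] at hx
  obtain ⟨t, _, rfl⟩ := hx
  exact abs_nonneg _

lemma mass_cons (t : Tm) (L : List Tm) : mass (t :: L) = |t.1| + mass L := rfl

lemma mass_append (L1 L2 : List Tm) : mass (L1 ++ L2) = mass L1 + mass L2 := by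
  simp [mass]

lemma sum_sub_single (d : Fin 3 → ℕ) (k : Fin 3) (h : 1 ≤ d k) :
    ∑ l, (d l - (if l = k then 1 else 0)) = (∑ l, d l) - 1 := by
  rw [← Finset.add_sum_erase _ _ (Finset.mem_univ k),
      ← Finset.add_sum_erase _ d (Finset.mem_univ k), if_pos rfl]
  have he : ∑ l ∈ Finset.univ.erase k, (d l - (if l = k then 1 else 0))
      = ∑ l ∈ Finset.univ.erase k, d l :=
    Finset.sum_congr rfl fun j hj => by simp [Finset.ne_of_mem_erase hj]
  omega

lemma sum_add_single (d : Fin 3 → ℕ) (k : Fin 3) :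
    ∑ l, (d l + (if l = k then 1 else 0)) = (∑ l, d l) + 1 := by
  rw [Finset.sum_add_distrib]
  simp [Finset.sum_ite_eq']

lemma good_step (γ : ℝ) (k : Fin 3) (n : ℕ) (L : List Tm) (hL : Good n L) :
    Good (n + 1) (lD γ k L) := by
  intro t' ht'
  simp only [lD, List.mem_flatten, List.mem_map] at ht'
  obtain ⟨l, ⟨t, htL, rfl⟩, ht'l⟩ := ht'
  obtain ⟨c, d, m⟩ := t
  rcases hL _ htL with hc | ⟨hm, hS⟩
  · simp only [tmD, List.mem_cons, List.mem_singleton] at ht'l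
    simp only at hc
    rcases ht'l with rfl | rfl | h
    · left; simp [hc]
    · left; simp [hc]
    · exact absurd h List.not_mem_nil
  · simp only at hm hS
    simp only [tmD, List.mem_cons, List.mem_singleton] at ht'l
    rcases ht'l with rfl | rfl | h
    · rcases Nat.eq_zero_or_pos (d k) with h0 | h0
      · left; simp [h0]
      · right
        constructor
        · simp only []
          rw [sum_sub_single d k h0]
          have : 1 ≤ ∑ l, d l := le_trans h0 (Finset.single_le_sum (fun _ _ => Nat.zero_le _) (Finset.mem_univ k))
          omega
        · simp only []
          rw [sum_sub_single d k h0]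
          omega
    · right
      constructor
      · simp only []
        rw [sum_add_single d k]
        omega
      · simp only []
        rw [sum_add_single d k]
        omega
    · exact absurd h List.not_mem_nil

lemma mass_step (γ : ℝ) (hγ : γ ∈ Set.Icc (0:ℝ) 1) (k : Fin 3) (n : ℕ) (L : List Tm)
    (hL : Good n L) : mass (lD γ k L) ≤ (3 * n + 7) * mass L := by
  induction L with
  | nil => simp [lD, mass]
  | cons t L ih =>
    have htail : Good n L := fun t' ht' => hL t' (List.mem_cons_of_mem _ ht')
    have hstep := ih htail
    have hhead : mass (tmD γ k t) ≤ (3 * n + 7) * |t.1| := by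
      obtain ⟨c, d, m⟩ := t
      simp only [tmD, mass, List.map_cons, List.map_nil, List.sum_cons, List.sum_nil, add_zero]
      rcases hL _ List.mem_cons_self with hc | ⟨hm, hS⟩
      · simp only at hc
        simp [hc]
      · simp only at hm hS ⊢
        have hdk : d k ≤ n + 2 :=
          le_trans (Finset.single_le_sum (fun _ _ => Nat.zero_le _) (Finset.mem_univ k)) hS
        have hmn : m ≤ n + 1 := by omega
        have h1 : |c * (d k : ℝ)| ≤ ((n : ℝ) + 2) * |c| := by
          rw [abs_mul, Nat.abs_cast]
          have : (d k : ℝ) ≤ (n : ℝ) + 2 := by exact_mod_cast hdk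
          nlinarith [abs_nonneg c]
        have h2 : |c * (γ + 2 - 2 * (m : ℝ))| ≤ (2 * (n : ℝ) + 5) * |c| := by
          rw [abs_mul, mul_comm]
          apply mul_le_mul_of_nonneg_right _ (abs_nonneg c)
          rw [abs_le]
          have hm' : (m : ℝ) ≤ (n : ℝ) + 1 := by exact_mod_cast hmn
          constructor <;> nlinarith [hγ.1, hγ.2]
        calc |c * (d k : ℝ)| + |c * (γ + 2 - 2 * (m : ℝ))|
            ≤ ((n : ℝ) + 2) * |c| + (2 * (n : ℝ) + 5) * |c| := add_le_add h1 h2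
          _ = (3 * n + 7) * |c| := by ring
    rw [lD_cons, mass_append, mass_cons]
    have h7 : (0:ℝ) ≤ 3 * n + 7 := by positivity
    calc mass (tmD γ k t) + mass (lD γ k L)
        ≤ (3 * n + 7) * |t.1| + (3 * n + 7) * mass L := add_le_add hhead hstep
      _ = (3 * n + 7) * (|t.1| + mass L) := by ring

lemma iter_good_mass (γ : ℝ) (hγ : γ ∈ Set.Icc (0:ℝ) 1) (k : Fin 3) (q n : ℕ) (L : List Tm)
    (hL : Good n L) :
    Good (n + q) ((lD γ k)^[q] L) ∧
      mass ((lD γ k)^[q] L) ≤ (∏ j ∈ Finset.range q, ((3 : ℝ) * (n + j) + 7)) * mass L := by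
  induction q with
  | zero => exact ⟨by simpa using hL, by simp⟩
  | succ q ih =>
    obtain ⟨hg, hmass⟩ := ih
    constructor
    · rw [Function.iterate_succ_apply']
      have := good_step γ k (n + q) _ hg
      simpa [Nat.add_assoc] using this
    · rw [Function.iterate_succ_apply', Finset.prod_range_succ]
      have hstep := mass_step γ hγ k (n + q) _ hg
      have hnn : (0:ℝ) ≤ ∏ j ∈ Finset.range q, ((3 : ℝ) * (n + j) + 7) := by
        apply Finset.prod_nonneg; intro j _; positivity
      calc mass (lD γ k ((lD γ k)^[q] L)) ≤ (3 * (n + q : ℕ) + 7) * mass ((lD γ k)^[q] L) :=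
            hstep
        _ ≤ (3 * (n + q : ℕ) + 7) * ((∏ j ∈ Finset.range q, ((3 : ℝ) * (n + j) + 7)) * mass L) := by
            apply mul_le_mul_of_nonneg_left hmass; positivity
        _ = (∏ j ∈ Finset.range q, ((3:ℝ) * (n + j) + 7)) * ((3:ℝ) * ((n:ℝ) + q) + 7) * mass L := by
            push_cast; ring

lemma coord_le_norm (v : E3) (l : Fin 3) : |v l| ≤ ‖v‖ := by
  have h := abs_real_inner_le_norm v (EuclideanSpace.single l 1)
  have h2 : (inner ℝ v (EuclideanSpace.single l (1:ℝ)) : ℝ) = v l := by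
    simp [EuclideanSpace.inner_single_right]
  rw [h2] at h
  simpa using h

lemma tm_bound (γ : ℝ) (hγ : γ ∈ Set.Icc (0:ℝ) 1) (n : ℕ) (hn : 2 ≤ n) (t : Tm)
    (ht : t.1 = 0 ∨ (2 * t.2.2 = (∑ l, t.2.1 l) + n ∧ (∑ l, t.2.1 l) ≤ n + 2))
    (v : E3) (hv : 1 ≤ ‖v‖) : |tmSem γ t v| ≤ |t.1| * ‖v‖ ^ γ := by
  obtain ⟨c, d, m⟩ := t
  rcases ht with hc | ⟨hm, _⟩
  · simp only at hc
    simp [tmSem, hc]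
  · simp only at hm
    have hvp : (0:ℝ) < ‖v‖ := lt_of_lt_of_le one_pos hv
    simp only [tmSem, abs_mul]
    have hR : |‖v‖ ^ (γ + 2 - 2 * (m:ℝ))| = ‖v‖ ^ (γ + 2 - 2 * (m:ℝ)) :=
      abs_of_nonneg (Real.rpow_nonneg (norm_nonneg v) _)
    rw [hR]
    have hP : |∏ l, v l ^ d l| ≤ ‖v‖ ^ (∑ l, d l) := by
      rw [Finset.abs_prod]
      rw [← Finset.prod_pow_eq_pow_sum]
      apply Finset.prod_le_prod
      · intro l _; positivity
      · intro l _
        rw [abs_pow]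
        exact pow_le_pow_left₀ (abs_nonneg _) (coord_le_norm v l) _
    have hcomb : ‖v‖ ^ (∑ l, d l) * ‖v‖ ^ (γ + 2 - 2 * (m:ℝ)) ≤ ‖v‖ ^ γ := by
      rw [← Real.rpow_natCast ‖v‖ (∑ l, d l), ← Real.rpow_add hvp]
      apply Real.rpow_le_rpow_of_exponent_le hv
      have : ((∑ l, d l : ℕ) : ℝ) + n = 2 * (m : ℝ) := by exact_mod_cast hm.symm
      have hn' : (2:ℝ) ≤ (n:ℝ) := by exact_mod_cast hn
      linarith
    calc |c| * |∏ l, v l ^ d l| * ‖v‖ ^ (γ + 2 - 2 * (m:ℝ))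
        ≤ |c| * (‖v‖ ^ (∑ l, d l) * ‖v‖ ^ (γ + 2 - 2 * (m:ℝ))) := by
          rw [← mul_assoc]
          apply mul_le_mul_of_nonneg_right _ (Real.rpow_nonneg (norm_nonneg v) _)
          exact mul_le_mul_of_nonneg_left hP (abs_nonneg c)
      _ ≤ |c| * ‖v‖ ^ γ := mul_le_mul_of_nonneg_left hcomb (abs_nonneg c)

lemma lSem_bound (γ : ℝ) (hγ : γ ∈ Set.Icc (0:ℝ) 1) (n : ℕ) (hn : 2 ≤ n) (L : List Tm)
    (hL : Good n L) (v : E3) (hv : 1 ≤ ‖v‖) : |lSem γ L v| ≤ mass L * ‖v‖ ^ γ := by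
  induction L with
  | nil => simp [lSem, mass]
  | cons t L ih =>
    have htail : Good n L := fun t' ht' => hL t' (List.mem_cons_of_mem _ ht')
    calc |lSem γ (t :: L) v| ≤ |tmSem γ t v| + |lSem γ L v| := by
          rw [lSem_cons]; exact abs_add_le _ _
      _ ≤ |t.1| * ‖v‖ ^ γ + mass L * ‖v‖ ^ γ :=
          add_le_add (tm_bound γ hγ n hn t (hL t List.mem_cons_self) v hv) (ih htail)
      _ = mass (t :: L) * ‖v‖ ^ γ := by rw [mass_cons]; ring

lemma real_rpow_add_le (a b γ : ℝ) (ha : 0 ≤ a) (hb : 0 ≤ b) (h0 : 0 ≤ γ) (h1 : γ ≤ 1) :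
    (a + b) ^ γ ≤ a ^ γ + b ^ γ := by
  have h := NNReal.rpow_add_le_add_rpow a.toNNReal b.toNNReal h0 h1
  have h2 := NNReal.coe_le_coe.mpr h
  simpa [NNReal.coe_rpow, Real.coe_toNNReal a ha, Real.coe_toNNReal b hb,
    Real.coe_toNNReal (a + b) (add_nonneg ha hb)] using h2

lemma prod_factor_le (n : ℕ) : ∏ j ∈ Finset.range n, ((3:ℝ) * j + 7) ≤ 10 ^ n * n.factorial := by
  calc ∏ j ∈ Finset.range n, ((3:ℝ) * j + 7)
      ≤ ∏ j ∈ Finset.range n, ((10:ℝ) * (j + 1)) := by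
        apply Finset.prod_le_prod
        · intro j _; positivity
        · intro j _
          have : (0:ℝ) ≤ (j:ℝ) := Nat.cast_nonneg j
          linarith
    _ = 10 ^ n * n.factorial := by
        rw [Finset.prod_mul_distrib, Finset.prod_const, Finset.card_range]
        congr 1
        have := Finset.prod_range_add_one_eq_factorial n
        exact_mod_cast congrArg (Nat.cast : ℕ → ℝ) this

lemma good_L0 (i j : Fin 3) : Good 0 (L0 i j) := by
  intro t ht
  simp only [L0, List.mem_cons, List.mem_singleton] at ht
  rcases ht with rfl | rfl | h
  · right; simp
  · right
    constructor <;> · simp [Finset.sum_add_distrib, Finset.sum_ite_eq']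
  · exact absurd h List.not_mem_nil

lemma mass_L0 (i j : Fin 3) : mass (L0 i j) ≤ 2 := by
  simp only [L0, mass, List.map_cons, List.map_nil, List.sum_cons, List.sum_nil]
  split_ifs <;> norm_num


theorem deriv_aL_bound_far (γ : ℝ) (hγ : γ ∈ Set.Icc (0 : ℝ) 1) (i j : Fin 3) :
    ∃ C : ℝ, 1 ≤ C ∧ ∀ β : Fin 3 → ℕ, 2 ≤ ∑ k, β k →
      ∀ v vs : EuclideanSpace ℝ (Fin 3), 1 ≤ ‖v - vs‖ →
      |pdiffIter β (aL γ i j) (v - vs)|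
        ≤ C ^ (∑ k, β k) * ((∑ k, β k).factorial : ℝ) * (1 + ‖vs‖ ^ γ + ‖v‖ ^ γ) := by
  refine ⟨20, by norm_num, ?_⟩
  intro β hβ v vs hw1
  set n := ∑ k, β k with hn
  set w : E3 := v - vs with hwdef
  have hw0 : w ≠ 0 := by
    intro h
    rw [h] at hw1
    simp at hw1
    linarith
  have hwU : w ∈ {x : E3 | x ≠ 0} := hw0
  -- symbolic lists
  set L2 : List Tm := (lD γ 2)^[β 2] (L0 i j) with hL2
  set L1 : List Tm := (lD γ 1)^[β 1] L2 with hL1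
  set Lf : List Tm := (lD γ 0)^[β 0] L1 with hLf
  -- EqOn chain
  have e2 : Set.EqOn ((pdiff 2)^[β 2] (aL γ i j)) (lSem γ L2) {x : E3 | x ≠ 0} :=
    (pdiff_iter_congr 2 (β 2) isOpen_compl_singleton (aL_eq_lSem γ i j)).trans
      (pdiff_iter_lSem γ 2 (β 2) (L0 i j))
  have e1 : Set.EqOn ((pdiff 1)^[β 1] ((pdiff 2)^[β 2] (aL γ i j))) (lSem γ L1)
      {x : E3 | x ≠ 0} :=
    (pdiff_iter_congr 1 (β 1) isOpen_compl_singleton e2).trans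
      (pdiff_iter_lSem γ 1 (β 1) L2)
  have e0 : Set.EqOn ((pdiff 0)^[β 0] ((pdiff 1)^[β 1] ((pdiff 2)^[β 2] (aL γ i j))))
      (lSem γ Lf) {x : E3 | x ≠ 0} :=
    (pdiff_iter_congr 0 (β 0) isOpen_compl_singleton e1).trans
      (pdiff_iter_lSem γ 0 (β 0) L1)
  have hval : pdiffIter β (aL γ i j) w = lSem γ Lf w := e0 hwU
  -- goodness and mass
  obtain ⟨g2, m2⟩ := iter_good_mass γ hγ 2 (β 2) 0 (L0 i j) (good_L0 i j)
  obtain ⟨g1, m1⟩ := iter_good_mass γ hγ 1 (β 1) (0 + β 2) L2 g2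
  obtain ⟨g0, m0⟩ := iter_good_mass γ hγ 0 (β 0) (0 + β 2 + β 1) L1 g1
  have hsum3 : n = β 0 + β 1 + β 2 := by rw [hn, Fin.sum_univ_three]
  have hneq : 0 + β 2 + β 1 + β 0 = n := by omega
  have gf : Good n Lf := by rw [← hneq]; exact g0
  -- combine masses
  have hP2 : (0:ℝ) ≤ ∏ x ∈ Finset.range (β 2), ((3:ℝ) * ((0:ℕ) + x) + 7) := by
    apply Finset.prod_nonneg; intro x _; positivity
  have hP1 : (0:ℝ) ≤ ∏ x ∈ Finset.range (β 1), ((3:ℝ) * (((0:ℕ) + β 2 : ℕ) + x) + 7) := by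
    apply Finset.prod_nonneg; intro x _; positivity
  have hP0 : (0:ℝ) ≤ ∏ x ∈ Finset.range (β 0), ((3:ℝ) * (((0:ℕ) + β 2 + β 1 : ℕ) + x) + 7) := by
    apply Finset.prod_nonneg; intro x _; positivity
  set f : ℕ → ℝ := fun x => (3:ℝ) * x + 7 with hf
  have key : (∏ x ∈ Finset.range (β 2), ((3:ℝ) * ((0:ℕ) + x) + 7)) *
      (∏ x ∈ Finset.range (β 1), ((3:ℝ) * (((0:ℕ) + β 2 : ℕ) + x) + 7)) *
      (∏ x ∈ Finset.range (β 0), ((3:ℝ) * (((0:ℕ) + β 2 + β 1 : ℕ) + x) + 7))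
      = ∏ x ∈ Finset.range n, f x := by
    have hn' : n = β 2 + β 1 + β 0 := by omega
    rw [hn', Finset.prod_range_add f (β 2 + β 1) (β 0), Finset.prod_range_add f (β 2) (β 1)]
    congr 1
    · congr 1
      · exact Finset.prod_congr rfl fun x _ => by push_cast [hf]; ring
      · exact Finset.prod_congr rfl fun x _ => by push_cast [hf]; ring
    · exact Finset.prod_congr rfl fun x _ => by push_cast [hf]; ring
  have c2 : mass L2 ≤ (∏ x ∈ Finset.range (β 2), ((3:ℝ) * ((0:ℕ) + x) + 7)) * 2 :=
    le_trans m2 (mul_le_mul_of_nonneg_left (mass_L0 i j) hP2)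
  have c1 : mass L1 ≤ (∏ x ∈ Finset.range (β 1), ((3:ℝ) * (((0:ℕ) + β 2 : ℕ) + x) + 7)) *
      ((∏ x ∈ Finset.range (β 2), ((3:ℝ) * ((0:ℕ) + x) + 7)) * 2) :=
    le_trans m1 (mul_le_mul_of_nonneg_left c2 hP1)
  have c0 : mass Lf ≤ (∏ x ∈ Finset.range (β 0), ((3:ℝ) * (((0:ℕ) + β 2 + β 1 : ℕ) + x) + 7)) *
      ((∏ x ∈ Finset.range (β 1), ((3:ℝ) * (((0:ℕ) + β 2 : ℕ) + x) + 7)) *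
      ((∏ x ∈ Finset.range (β 2), ((3:ℝ) * ((0:ℕ) + x) + 7)) * 2)) :=
    le_trans m0 (mul_le_mul_of_nonneg_left c1 hP0)
  have massf : mass Lf ≤ (∏ x ∈ Finset.range n, f x) * 2 := by
    calc mass Lf ≤ _ := c0
      _ = ((∏ x ∈ Finset.range (β 2), ((3:ℝ) * ((0:ℕ) + x) + 7)) *
          (∏ x ∈ Finset.range (β 1), ((3:ℝ) * (((0:ℕ) + β 2 : ℕ) + x) + 7)) *
          (∏ x ∈ Finset.range (β 0), ((3:ℝ) * (((0:ℕ) + β 2 + β 1 : ℕ) + x) + 7))) * 2 := by ring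
      _ = (∏ x ∈ Finset.range n, f x) * 2 := by rw [key]
  -- final estimates
  have hprodle : (∏ x ∈ Finset.range n, f x) ≤ 10 ^ n * n.factorial := prod_factor_le n
  have hwγpos : (0:ℝ) ≤ ‖w‖ ^ γ := Real.rpow_nonneg (norm_nonneg w) γ
  have hwγ : ‖w‖ ^ γ ≤ 1 + ‖vs‖ ^ γ + ‖v‖ ^ γ := by
    have h1 : ‖w‖ ≤ ‖v‖ + ‖vs‖ := norm_sub_le v vs
    have h2 : ‖w‖ ^ γ ≤ (‖v‖ + ‖vs‖) ^ γ := Real.rpow_le_rpow (norm_nonneg w) h1 hγ.1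
    have h3 := real_rpow_add_le ‖v‖ ‖vs‖ γ (norm_nonneg v) (norm_nonneg vs) hγ.1 hγ.2
    linarith
  have h20 : (∏ x ∈ Finset.range n, f x) * 2 ≤ (20:ℝ) ^ n * n.factorial := by
    have h2n : (2:ℝ) ≤ 2 ^ n := by
      calc (2:ℝ) = 2 ^ 1 := (pow_one 2).symm
        _ ≤ 2 ^ n := pow_le_pow_right₀ (by norm_num) (by omega)
    have hfac : (1:ℝ) ≤ n.factorial := by exact_mod_cast Nat.one_le_iff_ne_zero.mpr n.factorial_ne_zero
    have : (20:ℝ) ^ n = 2 ^ n * 10 ^ n := by rw [← mul_pow]; norm_num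
    rw [this]
    nlinarith [hprodle, pow_nonneg (by norm_num : (0:ℝ) ≤ 10) n,
      pow_nonneg (by norm_num : (0:ℝ) ≤ 2) n,
      Finset.prod_nonneg (fun x (_ : x ∈ Finset.range n) => by positivity : ∀ x ∈ Finset.range n, (0:ℝ) ≤ f x)]
  have hbound := lSem_bound γ hγ n hβ Lf gf w hw1
  calc |pdiffIter β (aL γ i j) w| = |lSem γ Lf w| := by rw [hval]
    _ ≤ mass Lf * ‖w‖ ^ γ := hbound
    _ ≤ ((∏ x ∈ Finset.range n, f x) * 2) * ‖w‖ ^ γ := mul_le_mul_of_nonneg_right massf hwγpos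
    _ ≤ ((20:ℝ) ^ n * n.factorial) * ‖w‖ ^ γ := mul_le_mul_of_nonneg_right h20 hwγpos
    _ ≤ (20:ℝ) ^ n * n.factorial * (1 + ‖vs‖ ^ γ + ‖v‖ ^ γ) := by
        apply mul_le_mul_of_nonneg_left hwγ
        positivity

end
end
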